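/- Fix an integer k ≥ 1 and α ∈ (−1/k, −1/(k+1)), fix n ≥ 1 and set p = n^α (real power). Let i, j be integers with 0 ≤ i, j ≤ n − 1 and let Ā = (A₁,A₂,A₃,A₄) be a quadruple of subsets of [n] with |A₁| = |A₂| = i + 1 and |A₃| = |A₄| = j + 1 that does NOT have an independent set. Then: (i) n^{ver(Ā)} · p^{pair(Ā)} ≤ n^{4k} · p^{4·C(k+1,2) − 2}; and (ii) if moreover i + j ≥ 16k + 15, then n^{ver(Ā)} · p^{pair(Ā)} ≤ n^{4k} · p^{4·C(k+1,2) − 2} / n^{2k + 2(i + j − 16k − 15)}. -/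
import Mathlib


open Finset MeasureTheory Filter Real

noncomputable section

open scoped Classical

/-- The edge set `E_n`: unordered pairs of distinct elements of `[n]`. -/
abbrev Edge (n : ℕ) := {e : Sym2 (Fin n) // ¬ e.IsDiag}

/-- An edge configuration on `[n]`. -/
abbrev Config (n : ℕ) := Edge n → Bool

/-- Bernoulli(p) weight of a state. -/
def bern (p : ℝ) (b : Bool) : ℝ := if b then p else 1 - p

/-- Weight of a configuration under the static Erdős–Rényi measure `μ_{n,p}`. -/
def staticWeight (n : ℕ) (p : ℝ) (ω : Config n) : ℝ := ∏ e : Edge n, bern p (ω e)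

/-- Expectation under the static Erdős–Rényi measure `μ_{n,p}`. -/
def staticExp (n : ℕ) (p : ℝ) (f : Config n → ℝ) : ℝ :=
  ∑ ω : Config n, staticWeight n p ω * f ω

/-- Variance under the static Erdős–Rényi measure `μ_{n,p}`. -/
def staticVar (n : ℕ) (p : ℝ) (f : Config n → ℝ) : ℝ :=
  staticExp n p (fun ω => (f ω - staticExp n p f) ^ 2)

/-- `A` is a clique of the graph `G(ω)`: every pair of distinct elements of `A`
is an edge of `G(ω)`. -/
def IsCliqueOf {n : ℕ} (A : Finset (Fin n)) (ω : Config n) : Prop :=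
  ∀ e : Edge n, e.1 ∈ A.sym2 → ω e = true

/-- The clique count `f_{n,j}(ω)`: the number of `(j+1)`-element subsets of `[n]`
all of whose pairs are edges of `G(ω)`. -/
def cliqueCount (n j : ℕ) (ω : Config n) : ℕ :=
  ((Finset.powersetCard (j + 1) (Finset.univ : Finset (Fin n))).filter
    (fun A => IsCliqueOf A ω)).card

/-- Real-valued clique count. -/
def cliqueCountR (n j : ℕ) (ω : Config n) : ℝ := (cliqueCount n j ω : ℝ)

/-- The Euler characteristic `χ_n(ω) = Σ_{j=0}^{n-1} (-1)^j f_{n,j}(ω)`. -/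
def eulerChar (n : ℕ) (ω : Config n) : ℝ :=
  ∑ j ∈ Finset.range n, (-1 : ℝ) ^ j * cliqueCountR n j ω

/-- Transition probability of the stationary on/off Markov chain with invariant
law Bernoulli(p) over a time increment `s`. -/
def transP (lam p s : ℝ) (b b' : Bool) : ℝ :=
  if b then (if b' then p + (1 - p) * Real.exp (-lam * s)
             else (1 - p) * (1 - Real.exp (-lam * s)))
  else (if b' then p * (1 - Real.exp (-lam * s))
        else (1 - p) + p * Real.exp (-lam * s))

/-- Weight of a trajectory of the stationary on/off Markov chain observed at the
times `t 0 ≤ t 1 ≤ …`. -/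
def pathWeight (lam p : ℝ) {m : ℕ} (t : Fin m → ℝ) (b : Fin m → Bool) : ℝ :=
  ∏ i : Fin m,
    if (i : ℕ) = 0 then bern p (b i)
    else transP lam p (t i - t ⟨(i : ℕ) - 1, lt_of_le_of_lt (Nat.sub_le _ _) i.isLt⟩)
      (b ⟨(i : ℕ) - 1, lt_of_le_of_lt (Nat.sub_le _ _) i.isLt⟩) (b i)

/-- Weight of an `m`-tuple of edge configurations under the `m`-time dynamic
Erdős–Rényi measure `μ_{n,p}^{(t 0, …, t (m-1))}`. -/
def dynWeight (lam p : ℝ) (n : ℕ) {m : ℕ} (t : Fin m → ℝ) (ω : Fin m → Config n) : ℝ :=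
  ∏ e : Edge n, pathWeight lam p t (fun i => ω i e)

/-- Expectation under the `m`-time dynamic Erdős–Rényi measure. -/
def dynExp (lam p : ℝ) (n : ℕ) {m : ℕ} (t : Fin m → ℝ) (F : (Fin m → Config n) → ℝ) : ℝ :=
  ∑ ω : Fin m → Config n, dynWeight lam p n t ω * F ω

/-- The normalized clique count `f̄_{n,k}` (under the measure `μ_{n,p}`). -/
def fbar (n k : ℕ) (p : ℝ) (ω : Config n) : ℝ :=
  (cliqueCountR n k ω - staticExp n p (cliqueCountR n k)) /
    Real.sqrt (staticVar n p (cliqueCountR n k))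

/-- The normalized Euler characteristic `χ̄_n` (under the measure `μ_{n,p}`). -/
def chibar (n : ℕ) (p : ℝ) (ω : Config n) : ℝ :=
  (eulerChar n ω - staticExp n p (eulerChar n)) /
    Real.sqrt (staticVar n p (eulerChar n))

/-- The clique indicator `1_A(ω)` as a real number. -/
def cliqueInd {n : ℕ} (A : Finset (Fin n)) (ω : Config n) : ℝ :=
  if IsCliqueOf A ω then 1 else 0

/-- A quadruple of subsets has an independent set if one of them shares at most
one vertex with each of the others. -/
def HasIndepSet {n : ℕ} (A : Fin 4 → Finset (Fin n)) : Prop :=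
  ∃ q : Fin 4, ∀ r : Fin 4, r ≠ q → ((A q) ∩ (A r)).card ≤ 1

/-- The quantity `g(h; Ā)` built from clique indicators at three times. -/
def gQuad {n : ℕ} (A : Fin 4 → Finset (Fin n)) (ω : Fin 3 → Config n) : ℝ :=
  (cliqueInd (A 0) (ω 2) - cliqueInd (A 0) (ω 1)) *
  (cliqueInd (A 1) (ω 2) - cliqueInd (A 1) (ω 1)) *
  (cliqueInd (A 2) (ω 1) - cliqueInd (A 2) (ω 0)) *
  (cliqueInd (A 3) (ω 1) - cliqueInd (A 3) (ω 0))

/-- `ver(Ā)`: inclusion–exclusion count of vertices. -/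
def verA {n : ℕ} (A : Fin 4 → Finset (Fin n)) : ℤ :=
  (∑ q : Fin 4, ((A q).card : ℤ))
  - (∑ q : Fin 4, ∑ r : Fin 4, if q < r then (((A q) ∩ (A r)).card : ℤ) else 0)
  + (∑ q : Fin 4, ∑ r : Fin 4, ∑ s : Fin 4,
      if q < r ∧ r < s then (((A q) ∩ (A r) ∩ (A s)).card : ℤ) else 0)
  - ((A 0 ∩ A 1 ∩ A 2 ∩ A 3).card : ℤ)

/-- `pair(Ā)`: inclusion–exclusion count of potential edges. -/
def pairA {n : ℕ} (A : Fin 4 → Finset (Fin n)) : ℤ :=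
  (∑ q : Fin 4, (Nat.choose (A q).card 2 : ℤ))
  - (∑ q : Fin 4, ∑ r : Fin 4, if q < r then (Nat.choose ((A q) ∩ (A r)).card 2 : ℤ) else 0)
  + (∑ q : Fin 4, ∑ r : Fin 4, ∑ s : Fin 4,
      if q < r ∧ r < s then (Nat.choose ((A q) ∩ (A r) ∩ (A s)).card 2 : ℤ) else 0)
  - (Nat.choose (A 0 ∩ A 1 ∩ A 2 ∩ A 3).card 2 : ℤ)


section Statement16Helpers

lemma choose2_cast (s : ℕ) : ((s.choose 2 : ℕ) : ℤ) * 2 = s * s - s := by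
  induction s with
  | zero => simp
  | succ t ih =>
    rw [Nat.choose_succ_succ]
    push_cast
    have h1 : (t.choose 1 : ℤ) = t := by simp
    rw [h1]; push_cast at ih; nlinarith [ih]

lemma consec_nonneg (x : ℤ) : 0 ≤ x * (x - 1) := by
  rcases le_or_gt x 0 with h | h
  · nlinarith
  · nlinarith

lemma pc_inter {X : Type*} [DecidableEq X] (S T : Finset X) :
    powersetCard 2 (S ∩ T) = powersetCard 2 S ∩ powersetCard 2 T := by
  ext U
  simp [Finset.mem_powersetCard, Finset.subset_inter_iff]
  tauto

lemma incl4 {X : Type*} [DecidableEq X] (C0 C1 C2 C3 : Finset X) :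
    ((C0 ∪ C1 ∪ C2 ∪ C3).card : ℤ) =
      C0.card + C1.card + C2.card + C3.card
      - (C0 ∩ C1).card - (C0 ∩ C2).card - (C0 ∩ C3).card
      - (C1 ∩ C2).card - (C1 ∩ C3).card - (C2 ∩ C3).card
      + (C0 ∩ C1 ∩ C2).card + (C0 ∩ C1 ∩ C3).card + (C0 ∩ C2 ∩ C3).card
      + (C1 ∩ C2 ∩ C3).card
      - (C0 ∩ C1 ∩ C2 ∩ C3).card := by
  classical
  have key : ∀ D : Finset X, D ⊆ C0 ∪ C1 ∪ C2 ∪ C3 →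
      (D.card : ℤ) = ∑ x ∈ C0 ∪ C1 ∪ C2 ∪ C3, (if x ∈ D then (1:ℤ) else 0) := by
    intro D hD
    rw [Finset.sum_ite_mem]
    rw [Finset.inter_eq_right.mpr hD]
    simp
  rw [key (C0 ∪ C1 ∪ C2 ∪ C3) (by rfl), key C0 (by intro x hx; simp [Finset.mem_union]; tauto),
    key C1 (by intro x hx; simp [Finset.mem_union]; tauto),
    key C2 (by intro x hx; simp [Finset.mem_union]; tauto),
    key C3 (by intro x hx; simp [Finset.mem_union]; tauto),
    key (C0 ∩ C1) (by intro x hx; simp [Finset.mem_union, Finset.mem_inter] at *; tauto),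
    key (C0 ∩ C2) (by intro x hx; simp [Finset.mem_union, Finset.mem_inter] at *; tauto),
    key (C0 ∩ C3) (by intro x hx; simp [Finset.mem_union, Finset.mem_inter] at *; tauto),
    key (C1 ∩ C2) (by intro x hx; simp [Finset.mem_union, Finset.mem_inter] at *; tauto),
    key (C1 ∩ C3) (by intro x hx; simp [Finset.mem_union, Finset.mem_inter] at *; tauto),
    key (C2 ∩ C3) (by intro x hx; simp [Finset.mem_union, Finset.mem_inter] at *; tauto),
    key (C0 ∩ C1 ∩ C2) (by intro x hx; simp [Finset.mem_union, Finset.mem_inter] at *; tauto),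
    key (C0 ∩ C1 ∩ C3) (by intro x hx; simp [Finset.mem_union, Finset.mem_inter] at *; tauto),
    key (C0 ∩ C2 ∩ C3) (by intro x hx; simp [Finset.mem_union, Finset.mem_inter] at *; tauto),
    key (C1 ∩ C2 ∩ C3) (by intro x hx; simp [Finset.mem_union, Finset.mem_inter] at *; tauto),
    key (C0 ∩ C1 ∩ C2 ∩ C3) (by intro x hx; simp [Finset.mem_union, Finset.mem_inter] at *; tauto)]
  simp only [← Finset.sum_add_distrib, ← Finset.sum_sub_distrib]
  apply Finset.sum_congr rfl
  intro x hx
  simp only [Finset.mem_union, Finset.mem_inter] at hx ⊢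
  by_cases h0 : x ∈ C0 <;> by_cases h1 : x ∈ C1 <;> by_cases h2 : x ∈ C2 <;> by_cases h3 : x ∈ C3 <;>
    simp [h0, h1, h2, h3]

lemma psi_pair (m s d : ℕ) (hm : 1 ≤ m) (hd : 2 ≤ d) (hds : d ≤ s) :
    2*(m:ℤ)*s + 2*(d.choose 2 : ℤ) ≤ 2*(m:ℤ)*d + 2*(s.choose 2:ℤ) + ((m:ℤ)-1)*((m:ℤ)-2) := by
  have c1 := choose2_cast s
  have c2 := choose2_cast d
  have hm' : (1:ℤ) ≤ m := by exact_mod_cast hm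
  have hd' : (2:ℤ) ≤ d := by exact_mod_cast hd
  have hds' : (d:ℤ) ≤ s := by exact_mod_cast hds
  rcases le_or_gt (d:ℤ) m with h | h
  · nlinarith [consec_nonneg ((s:ℤ) - m), mul_nonneg (by linarith : (0:ℤ) ≤ (d:ℤ)-2)
      (by linarith : (0:ℤ) ≤ 2*(m:ℤ)-(d:ℤ)-1)]
  · nlinarith [mul_nonneg (by linarith : (0:ℤ) ≤ (s:ℤ)-(d:ℤ))
      (by linarith : (0:ℤ) ≤ (s:ℤ)+(d:ℤ)-2*(m:ℤ)-1), consec_nonneg ((m:ℤ)-1)]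

lemma psi_free (m s d : ℕ) (hm : 1 ≤ m) (hds : d ≤ s) :
    2*(m:ℤ)*s + 2*(d.choose 2 : ℤ) ≤ 2*(m:ℤ)*d + 2*(s.choose 2:ℤ) + (m:ℤ)*((m:ℤ)+1) := by
  have c1 := choose2_cast s
  have c2 := choose2_cast d
  have hm' : (1:ℤ) ≤ m := by exact_mod_cast hm
  have hd' : (0:ℤ) ≤ d := by positivity
  have hds' : (d:ℤ) ≤ s := by exact_mod_cast hds
  rcases le_or_gt (d:ℤ) (m+1) with h | h
  · nlinarith [consec_nonneg ((s:ℤ) - m), mul_nonneg hd' (by linarith : (0:ℤ) ≤ 2*(m:ℤ)+1-(d:ℤ))]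
  · nlinarith [mul_nonneg (by linarith : (0:ℤ) ≤ (s:ℤ)-(d:ℤ))
      (by linarith : (0:ℤ) ≤ (s:ℤ)+(d:ℤ)-2*(m:ℤ)-1)]

lemma psi_first (m s : ℕ) (hm : 1 ≤ m) :
    2*(m:ℤ)*s + 2*(((s - m).choose 2 : ℕ) : ℤ) ≤ 2*(s.choose 2:ℤ) + (m:ℤ)*((m:ℤ)+1) := by
  have c1 := choose2_cast s
  have hm' : (1:ℤ) ≤ m := by exact_mod_cast hm
  rcases le_or_gt m s with h | h
  · have hc : ((s - m : ℕ) : ℤ) = (s:ℤ) - m := by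
      push_cast [Nat.cast_sub h]; ring
    have c2 := choose2_cast (s - m)
    rw [hc] at c2
    have hs' : (m:ℤ) ≤ s := by exact_mod_cast h
    nlinarith
  · rw [Nat.sub_eq_zero_of_le (le_of_lt h)]
    have hs' : (s:ℤ) < m := by exact_mod_cast h
    have hs0 : (0:ℤ) ≤ s := by positivity
    have : (0:ℕ).choose 2 = 0 := rfl
    rw [this]
    push_cast
    nlinarith

set_option maxHeartbeats 1000000 in
lemma core_bound {X : Type*} [DecidableEq X] (m : ℕ) (hm : 1 ≤ m) (B0 B1 B2 B3 : Finset X)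
    (h1 : 2 ≤ (B1 ∩ B0).card) (h3 : 2 ≤ (B3 ∩ (B0 ∪ B1 ∪ B2)).card) :
    (m:ℤ) * ((B0 ∪ B1 ∪ B2 ∪ B3).card : ℤ) + (((B0.card - m).choose 2 : ℕ) : ℤ)
      ≤ ((powersetCard 2 B0 ∪ powersetCard 2 B1 ∪ powersetCard 2 B2 ∪ powersetCard 2 B3).card : ℤ)
        + (2*(m:ℤ)^2 - 2*m + 2) := by
  classical
  have hv1 := Finset.card_union_add_card_inter B0 B1
  have hv2 := Finset.card_union_add_card_inter (B0 ∪ B1) B2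
  have hv3 := Finset.card_union_add_card_inter (B0 ∪ B1 ∪ B2) B3
  rw [Finset.inter_comm] at hv1 hv2 hv3
  have he1 := Finset.card_union_add_card_inter (powersetCard 2 B0) (powersetCard 2 B1)
  have he2 := Finset.card_union_add_card_inter (powersetCard 2 B0 ∪ powersetCard 2 B1) (powersetCard 2 B2)
  have he3 := Finset.card_union_add_card_inter
    (powersetCard 2 B0 ∪ powersetCard 2 B1 ∪ powersetCard 2 B2) (powersetCard 2 B3)
  have hi1 : (powersetCard 2 B0 ∩ powersetCard 2 B1).card = ((B1 ∩ B0).card).choose 2 := by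
    rw [← pc_inter, Finset.card_powersetCard, Finset.inter_comm]
  have hi2 : ((powersetCard 2 B0 ∪ powersetCard 2 B1) ∩ powersetCard 2 B2).card
      ≤ ((B2 ∩ (B0 ∪ B1)).card).choose 2 := by
    rw [← Finset.card_powersetCard 2 (B2 ∩ (B0 ∪ B1))]
    apply Finset.card_le_card
    intro T hT
    simp only [Finset.mem_inter, Finset.mem_union, Finset.mem_powersetCard] at hT ⊢
    obtain ⟨hl, hr⟩ := hT
    refine ⟨Finset.subset_inter hr.1 ?_, hr.2⟩
    rcases hl with ⟨h,_⟩ | ⟨h,_⟩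
    · exact h.trans Finset.subset_union_left
    · exact h.trans Finset.subset_union_right
  have hi3 : ((powersetCard 2 B0 ∪ powersetCard 2 B1 ∪ powersetCard 2 B2) ∩ powersetCard 2 B3).card
      ≤ ((B3 ∩ (B0 ∪ B1 ∪ B2)).card).choose 2 := by
    rw [← Finset.card_powersetCard 2 (B3 ∩ (B0 ∪ B1 ∪ B2))]
    apply Finset.card_le_card
    intro T hT
    simp only [Finset.mem_inter, Finset.mem_union, Finset.mem_powersetCard] at hT ⊢
    obtain ⟨hl, hr⟩ := hT
    refine ⟨Finset.subset_inter hr.1 ?_, hr.2⟩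
    rcases hl with (⟨h,_⟩ | ⟨h,_⟩) | ⟨h,_⟩
    · exact h.trans (Finset.subset_union_left.trans Finset.subset_union_left)
    · exact h.trans (Finset.subset_union_right.trans Finset.subset_union_left)
    · exact h.trans Finset.subset_union_right
  have hd1s : (B1 ∩ B0).card ≤ B1.card := Finset.card_le_card Finset.inter_subset_left
  have hd2s : (B2 ∩ (B0 ∪ B1)).card ≤ B2.card := Finset.card_le_card Finset.inter_subset_left
  have hd3s : (B3 ∩ (B0 ∪ B1 ∪ B2)).card ≤ B3.card := Finset.card_le_card Finset.inter_subset_left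
  have p0 := psi_first m B0.card hm
  have p1 := psi_pair m B1.card (B1 ∩ B0).card hm h1 hd1s
  have p2 := psi_free m B2.card (B2 ∩ (B0 ∪ B1)).card hm hd2s
  have p3 := psi_pair m B3.card (B3 ∩ (B0 ∪ B1 ∪ B2)).card hm h3 hd3s
  have hcard0 : (powersetCard 2 B0).card = B0.card.choose 2 := Finset.card_powersetCard 2 B0
  have hcard1 : (powersetCard 2 B1).card = B1.card.choose 2 := Finset.card_powersetCard 2 B1
  have hcard2 : (powersetCard 2 B2).card = B2.card.choose 2 := Finset.card_powersetCard 2 B2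
  have hcard3 : (powersetCard 2 B3).card = B3.card.choose 2 := Finset.card_powersetCard 2 B3
  rw [hcard0, hcard1, hi1] at he1
  rw [hcard2] at he2
  rw [hcard3] at he3
  have hv1' : ((B0∪B1).card:ℤ) + ((B1∩B0).card:ℤ) = (B0.card:ℤ) + (B1.card:ℤ) := by exact_mod_cast hv1
  have hv2' : ((B0∪B1∪B2).card:ℤ) + ((B2∩(B0∪B1)).card:ℤ) = ((B0∪B1).card:ℤ) + (B2.card:ℤ) := by
    exact_mod_cast hv2
  have hv3' : ((B0∪B1∪B2∪B3).card:ℤ) + ((B3∩(B0∪B1∪B2)).card:ℤ)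
      = ((B0∪B1∪B2).card:ℤ) + (B3.card:ℤ) := by exact_mod_cast hv3
  have he1' : ((powersetCard 2 B0 ∪ powersetCard 2 B1).card:ℤ) + (((B1 ∩ B0).card.choose 2 : ℕ):ℤ)
      = ((B0.card.choose 2:ℕ):ℤ) + ((B1.card.choose 2:ℕ):ℤ) := by exact_mod_cast he1
  have he2' : ((powersetCard 2 B0 ∪ powersetCard 2 B1 ∪ powersetCard 2 B2).card:ℤ)
      + (((powersetCard 2 B0 ∪ powersetCard 2 B1) ∩ powersetCard 2 B2).card:ℤ)
      = ((powersetCard 2 B0 ∪ powersetCard 2 B1).card:ℤ) + ((B2.card.choose 2:ℕ):ℤ) := by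
    exact_mod_cast he2
  have he3' : ((powersetCard 2 B0 ∪ powersetCard 2 B1 ∪ powersetCard 2 B2 ∪ powersetCard 2 B3).card:ℤ)
      + (((powersetCard 2 B0 ∪ powersetCard 2 B1 ∪ powersetCard 2 B2) ∩ powersetCard 2 B3).card:ℤ)
      = ((powersetCard 2 B0 ∪ powersetCard 2 B1 ∪ powersetCard 2 B2).card:ℤ)
        + ((B3.card.choose 2:ℕ):ℤ) := by exact_mod_cast he3
  have hi2' : (((powersetCard 2 B0 ∪ powersetCard 2 B1) ∩ powersetCard 2 B2).card:ℤ)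
      ≤ (((B2 ∩ (B0 ∪ B1)).card.choose 2:ℕ):ℤ) := by exact_mod_cast hi2
  have hi3' : (((powersetCard 2 B0 ∪ powersetCard 2 B1 ∪ powersetCard 2 B2) ∩ powersetCard 2 B3).card:ℤ)
      ≤ (((B3 ∩ (B0 ∪ B1 ∪ B2)).card.choose 2:ℕ):ℤ) := by exact_mod_cast hi3
  have hU : ((B0 ∪ B1 ∪ B2 ∪ B3).card : ℤ) = (B0.card:ℤ) + B1.card + B2.card + B3.card
      - ((B1∩B0).card:ℤ) - ((B2∩(B0∪B1)).card:ℤ) - ((B3∩(B0∪B1∪B2)).card:ℤ) := by linarith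
  have hMU : (m:ℤ) * ((B0 ∪ B1 ∪ B2 ∪ B3).card : ℤ) = (m:ℤ) * ((B0.card:ℤ) + B1.card + B2.card
      + B3.card - ((B1∩B0).card:ℤ) - ((B2∩(B0∪B1)).card:ℤ) - ((B3∩(B0∪B1∪B2)).card:ℤ)) := by
    rw [hU]
  rw [hMU]
  linarith [p0, p1, p2, p3, he1', he2', he3', hi2', hi3']

lemma pen_bound (k m S M : ℕ) (hk : 1 ≤ k) (hm1 : k ≤ m) (hm2 : m ≤ k + 1)
    (hS : 16*k + 17 ≤ S) (hM : S ≤ 2*M) :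
    (m:ℤ) * (2*(S:ℤ) - 30*k - 34) ≤ (((M - m).choose 2 : ℕ) : ℤ) := by
  have hmM : m ≤ M := by omega
  have hc : ((M - m : ℕ) : ℤ) = (M:ℤ) - m := by push_cast [Nat.cast_sub hmM]; ring
  have c2 := choose2_cast (M - m)
  rw [hc] at c2
  have hk' : (1:ℤ) ≤ k := by exact_mod_cast hk
  have hm1' : (k:ℤ) ≤ m := by exact_mod_cast hm1
  have hm2' : (m:ℤ) ≤ (k:ℤ) + 1 := by exact_mod_cast hm2
  have hS' : 16*(k:ℤ) + 17 ≤ S := by exact_mod_cast hS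
  have hM' : (S:ℤ) ≤ 2*M := by exact_mod_cast hM
  nlinarith [sq_nonneg ((S:ℤ) - 10*m - 1),
    mul_nonneg (by linarith : (0:ℤ) ≤ 2*(M:ℤ) - S) (by nlinarith : (0:ℤ) ≤ 2*(M:ℤ) + S - 4*m - 2),
    mul_nonneg (by linarith : (0:ℤ) ≤ (m:ℤ)) (by linarith : (0:ℤ) ≤ (k:ℤ) + 1 - m)]

lemma endpoint_interp (k : ℕ) (hk : 1 ≤ k) (α : ℝ) (hα1 : -1 < α * k)
    (hα2 : α * ((k:ℝ)+1) < -1) (v e D : ℝ)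
    (I1 : (k:ℝ)*v ≤ e + (2*(k:ℝ)^2 - 2*k + 2) - k*D)
    (I2 : ((k:ℝ)+1)*v ≤ e + (2*(k:ℝ)^2 + 2*k + 2) - ((k:ℝ)+1)*D) :
    v + α*e ≤ 4*k - D + α*(2*k*((k:ℝ)+1) - 2) := by
  have hk0 : (0:ℝ) < k := by exact_mod_cast Nat.lt_of_lt_of_le Nat.zero_lt_one hk
  rcases le_total e (2*(k:ℝ)*((k:ℝ)+1) - 2) with h | h
  · have key : (k:ℝ) * (v + α*e) ≤ (k:ℝ) * (4*k - D + α*(2*k*((k:ℝ)+1) - 2)) := by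
      nlinarith [mul_nonneg (by linarith : (0:ℝ) ≤ α*k + 1)
        (by linarith : (0:ℝ) ≤ (2*(k:ℝ)*((k:ℝ)+1) - 2) - e)]
    exact le_of_mul_le_mul_left key hk0
  · have hk10 : (0:ℝ) < (k:ℝ)+1 := by linarith
    have key : ((k:ℝ)+1) * (v + α*e) ≤ ((k:ℝ)+1) * (4*k - D + α*(2*k*((k:ℝ)+1) - 2)) := by
      nlinarith [mul_nonneg (by linarith : (0:ℝ) ≤ -(α*((k:ℝ)+1)) - 1)
        (by linarith : (0:ℝ) ≤ e - (2*(k:ℝ)*((k:ℝ)+1) - 2))]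
    exact le_of_mul_le_mul_left key hk10

lemma verA_eq {n : ℕ} (A : Fin 4 → Finset (Fin n)) :
    verA A = (((A 0 ∪ A 1 ∪ A 2 ∪ A 3).card : ℕ) : ℤ) := by
  rw [incl4 (A 0) (A 1) (A 2) (A 3)]
  simp only [verA, Fin.sum_univ_four]
  norm_num [Fin.lt_def, Fin.ext_iff, Finset.inter_assoc,
    show ((3:Fin 4):ℕ) = 3 from rfl, show ((2:Fin 4):ℕ) = 2 from rfl]
  ring

lemma pairA_eq {n : ℕ} (A : Fin 4 → Finset (Fin n)) :
    pairA A = (((powersetCard 2 (A 0) ∪ powersetCard 2 (A 1) ∪ powersetCard 2 (A 2)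
      ∪ powersetCard 2 (A 3)).card : ℕ) : ℤ) := by
  rw [incl4 (powersetCard 2 (A 0)) (powersetCard 2 (A 1)) (powersetCard 2 (A 2))
    (powersetCard 2 (A 3))]
  simp only [← pc_inter, Finset.card_powersetCard]
  simp only [pairA, Fin.sum_univ_four]
  norm_num [Fin.lt_def, Fin.ext_iff, Finset.inter_assoc,
    show ((3:Fin 4):ℕ) = 3 from rfl, show ((2:Fin 4):ℕ) = 2 from rfl]
  ring

lemma key_bound {n : ℕ} (A : Fin 4 → Finset (Fin n))
    (hind' : ∀ q : Fin 4, ∃ r : Fin 4, r ≠ q ∧ 2 ≤ ((A q) ∩ (A r)).card)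
    (q0 : Fin 4) (hq0 : q0 = 0 ∨ q0 = 2) (m : ℕ) (hm : 1 ≤ m) :
    (m:ℤ) * ((A 0 ∪ A 1 ∪ A 2 ∪ A 3).card : ℤ) + ((((A q0).card - m).choose 2 : ℕ) : ℤ)
      ≤ ((powersetCard 2 (A 0) ∪ powersetCard 2 (A 1) ∪ powersetCard 2 (A 2)
          ∪ powersetCard 2 (A 3)).card : ℤ) + (2*(m:ℤ)^2 - 2*m + 2) := by
  classical
  have hu4 : ∀ w : Fin 4, w = 0 ∨ w = 1 ∨ w = 2 ∨ w = 3 := by decide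
  rcases hq0 with rfl | rfl
  · obtain ⟨r, hr, hr2⟩ := hind' 0
    rcases hu4 r with rfl | rfl | rfl | rfl
    · exact absurd rfl hr
    · -- order (0,1,2,3)
      obtain ⟨u, hu, hu2⟩ := hind' 3
      have hsub : A u ⊆ A 0 ∪ A 1 ∪ A 2 := by
        rcases hu4 u with rfl | rfl | rfl | rfl
        · intro x hx; simp only [Finset.mem_union]; tauto
        · intro x hx; simp only [Finset.mem_union]; tauto
        · intro x hx; simp only [Finset.mem_union]; tauto
        · exact absurd rfl hu
      have h1 : 2 ≤ (A 1 ∩ A 0).card := by rwa [Finset.inter_comm]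
      have h3 : 2 ≤ (A 3 ∩ (A 0 ∪ A 1 ∪ A 2)).card :=
        hu2.trans (Finset.card_le_card (Finset.inter_subset_inter Finset.Subset.rfl hsub))
      exact core_bound m hm (A 0) (A 1) (A 2) (A 3) h1 h3
    · -- order (0,2,1,3)
      obtain ⟨u, hu, hu2⟩ := hind' 3
      have hsub : A u ⊆ A 0 ∪ A 2 ∪ A 1 := by
        rcases hu4 u with rfl | rfl | rfl | rfl
        · intro x hx; simp only [Finset.mem_union]; tauto
        · intro x hx; simp only [Finset.mem_union]; tauto
        · intro x hx; simp only [Finset.mem_union]; tauto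
        · exact absurd rfl hu
      have h1 : 2 ≤ (A 2 ∩ A 0).card := by rwa [Finset.inter_comm]
      have h3 : 2 ≤ (A 3 ∩ (A 0 ∪ A 2 ∪ A 1)).card :=
        hu2.trans (Finset.card_le_card (Finset.inter_subset_inter Finset.Subset.rfl hsub))
      have hc := core_bound m hm (A 0) (A 2) (A 1) (A 3) h1 h3
      have hU : A 0 ∪ A 2 ∪ A 1 ∪ A 3 = A 0 ∪ A 1 ∪ A 2 ∪ A 3 := by
        ext x; simp only [Finset.mem_union]; tauto
      have hE : powersetCard 2 (A 0) ∪ powersetCard 2 (A 2) ∪ powersetCard 2 (A 1)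
          ∪ powersetCard 2 (A 3) = powersetCard 2 (A 0) ∪ powersetCard 2 (A 1)
          ∪ powersetCard 2 (A 2) ∪ powersetCard 2 (A 3) := by
        ext x; simp only [Finset.mem_union]; tauto
      rwa [hU, hE] at hc
    · -- order (0,3,1,2)
      obtain ⟨u, hu, hu2⟩ := hind' 2
      have hsub : A u ⊆ A 0 ∪ A 3 ∪ A 1 := by
        rcases hu4 u with rfl | rfl | rfl | rfl
        · intro x hx; simp only [Finset.mem_union]; tauto
        · intro x hx; simp only [Finset.mem_union]; tauto
        · exact absurd rfl hu
        · intro x hx; simp only [Finset.mem_union]; tauto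
      have h1 : 2 ≤ (A 3 ∩ A 0).card := by rwa [Finset.inter_comm]
      have h3 : 2 ≤ (A 2 ∩ (A 0 ∪ A 3 ∪ A 1)).card :=
        hu2.trans (Finset.card_le_card (Finset.inter_subset_inter Finset.Subset.rfl hsub))
      have hc := core_bound m hm (A 0) (A 3) (A 1) (A 2) h1 h3
      have hU : A 0 ∪ A 3 ∪ A 1 ∪ A 2 = A 0 ∪ A 1 ∪ A 2 ∪ A 3 := by
        ext x; simp only [Finset.mem_union]; tauto
      have hE : powersetCard 2 (A 0) ∪ powersetCard 2 (A 3) ∪ powersetCard 2 (A 1)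
          ∪ powersetCard 2 (A 2) = powersetCard 2 (A 0) ∪ powersetCard 2 (A 1)
          ∪ powersetCard 2 (A 2) ∪ powersetCard 2 (A 3) := by
        ext x; simp only [Finset.mem_union]; tauto
      rwa [hU, hE] at hc
  · obtain ⟨r, hr, hr2⟩ := hind' 2
    rcases hu4 r with rfl | rfl | rfl | rfl
    · -- order (2,0,1,3)
      obtain ⟨u, hu, hu2⟩ := hind' 3
      have hsub : A u ⊆ A 2 ∪ A 0 ∪ A 1 := by
        rcases hu4 u with rfl | rfl | rfl | rfl
        · intro x hx; simp only [Finset.mem_union]; tauto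
        · intro x hx; simp only [Finset.mem_union]; tauto
        · intro x hx; simp only [Finset.mem_union]; tauto
        · exact absurd rfl hu
      have h1 : 2 ≤ (A 0 ∩ A 2).card := by rwa [Finset.inter_comm]
      have h3 : 2 ≤ (A 3 ∩ (A 2 ∪ A 0 ∪ A 1)).card :=
        hu2.trans (Finset.card_le_card (Finset.inter_subset_inter Finset.Subset.rfl hsub))
      have hc := core_bound m hm (A 2) (A 0) (A 1) (A 3) h1 h3
      have hU : A 2 ∪ A 0 ∪ A 1 ∪ A 3 = A 0 ∪ A 1 ∪ A 2 ∪ A 3 := by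
        ext x; simp only [Finset.mem_union]; tauto
      have hE : powersetCard 2 (A 2) ∪ powersetCard 2 (A 0) ∪ powersetCard 2 (A 1)
          ∪ powersetCard 2 (A 3) = powersetCard 2 (A 0) ∪ powersetCard 2 (A 1)
          ∪ powersetCard 2 (A 2) ∪ powersetCard 2 (A 3) := by
        ext x; simp only [Finset.mem_union]; tauto
      rwa [hU, hE] at hc
    · -- order (2,1,0,3)
      obtain ⟨u, hu, hu2⟩ := hind' 3
      have hsub : A u ⊆ A 2 ∪ A 1 ∪ A 0 := by
        rcases hu4 u with rfl | rfl | rfl | rfl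
        · intro x hx; simp only [Finset.mem_union]; tauto
        · intro x hx; simp only [Finset.mem_union]; tauto
        · intro x hx; simp only [Finset.mem_union]; tauto
        · exact absurd rfl hu
      have h1 : 2 ≤ (A 1 ∩ A 2).card := by rwa [Finset.inter_comm]
      have h3 : 2 ≤ (A 3 ∩ (A 2 ∪ A 1 ∪ A 0)).card :=
        hu2.trans (Finset.card_le_card (Finset.inter_subset_inter Finset.Subset.rfl hsub))
      have hc := core_bound m hm (A 2) (A 1) (A 0) (A 3) h1 h3
      have hU : A 2 ∪ A 1 ∪ A 0 ∪ A 3 = A 0 ∪ A 1 ∪ A 2 ∪ A 3 := by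
        ext x; simp only [Finset.mem_union]; tauto
      have hE : powersetCard 2 (A 2) ∪ powersetCard 2 (A 1) ∪ powersetCard 2 (A 0)
          ∪ powersetCard 2 (A 3) = powersetCard 2 (A 0) ∪ powersetCard 2 (A 1)
          ∪ powersetCard 2 (A 2) ∪ powersetCard 2 (A 3) := by
        ext x; simp only [Finset.mem_union]; tauto
      rwa [hU, hE] at hc
    · exact absurd rfl hr
    · -- order (2,3,0,1)
      obtain ⟨u, hu, hu2⟩ := hind' 1
      have hsub : A u ⊆ A 2 ∪ A 3 ∪ A 0 := by
        rcases hu4 u with rfl | rfl | rfl | rfl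
        · intro x hx; simp only [Finset.mem_union]; tauto
        · exact absurd rfl hu
        · intro x hx; simp only [Finset.mem_union]; tauto
        · intro x hx; simp only [Finset.mem_union]; tauto
      have h1 : 2 ≤ (A 3 ∩ A 2).card := by rwa [Finset.inter_comm]
      have h3 : 2 ≤ (A 1 ∩ (A 2 ∪ A 3 ∪ A 0)).card :=
        hu2.trans (Finset.card_le_card (Finset.inter_subset_inter Finset.Subset.rfl hsub))
      have hc := core_bound m hm (A 2) (A 3) (A 0) (A 1) h1 h3
      have hU : A 2 ∪ A 3 ∪ A 0 ∪ A 1 = A 0 ∪ A 1 ∪ A 2 ∪ A 3 := by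
        ext x; simp only [Finset.mem_union]; tauto
      have hE : powersetCard 2 (A 2) ∪ powersetCard 2 (A 3) ∪ powersetCard 2 (A 0)
          ∪ powersetCard 2 (A 1) = powersetCard 2 (A 0) ∪ powersetCard 2 (A 1)
          ∪ powersetCard 2 (A 2) ∪ powersetCard 2 (A 3) := by
        ext x; simp only [Finset.mem_union]; tauto
      rwa [hU, hE] at hc

lemma real_reduce (n : ℕ) (hn : 1 ≤ n) (k : ℕ) (hk : 1 ≤ k) (α : ℝ)
    (hα : α ∈ Set.Ioo (-(1 / (k : ℝ))) (-(1 / ((k : ℝ) + 1)))) (v e : ℤ) (Dn : ℕ)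
    (I1 : (k:ℤ)*v + (k:ℤ)*(Dn:ℤ) ≤ e + (2*(k:ℤ)^2 - 2*k + 2))
    (I2 : ((k:ℤ)+1)*v + ((k:ℤ)+1)*(Dn:ℤ) ≤ e + (2*(k:ℤ)^2 + 2*k + 2)) :
    (n:ℝ)^v * ((n:ℝ)^α)^e ≤
      (n:ℝ)^(4*k) * ((n:ℝ)^α)^(4 * Nat.choose (k+1) 2 - 2) / (n:ℝ)^Dn := by
  have hx1 : (1:ℝ) ≤ (n:ℝ) := by exact_mod_cast hn
  have h4c : 4 * Nat.choose (k+1) 2 = 2*((k+1)*k) := by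
    rw [Nat.choose_two_right]
    simp only [Nat.add_sub_cancel]
    have h2 : 2 ∣ (k+1)*k := by
      simpa [mul_comm] using (Nat.even_mul_succ_self k).two_dvd
    omega
  rcases eq_or_lt_of_le hx1 with h1 | h1
  · rw [← h1]
    simp [Real.one_rpow]
  · have hx0 : (0:ℝ) < (n:ℝ) := lt_trans one_pos h1
    have hk0 : (0:ℝ) < (k:ℝ) := by exact_mod_cast hk
    have hE2 : ((4 * Nat.choose (k+1) 2 - 2 : ℕ) : ℝ) = 2*(k:ℝ)*((k:ℝ)+1) - 2 := by
      have hle : 2 ≤ 4 * Nat.choose (k+1) 2 := by rw [h4c]; nlinarith [hk]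
      rw [Nat.cast_sub hle, h4c]
      push_cast; ring
    have hrw : (n:ℝ)^v * ((n:ℝ)^α)^e = (n:ℝ) ^ ((v:ℝ) + α*(e:ℝ)) := by
      rw [Real.rpow_add hx0, Real.rpow_intCast, ← Real.rpow_intCast ((n:ℝ)^α) e,
        ← Real.rpow_mul hx0.le]
    have hrw2 : (n:ℝ)^(4*k) * ((n:ℝ)^α)^(4 * Nat.choose (k+1) 2 - 2) / (n:ℝ)^Dn
        = (n:ℝ) ^ (4*(k:ℝ) - (Dn:ℝ) + α*(2*(k:ℝ)*((k:ℝ)+1) - 2)) := by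
      rw [← Real.rpow_natCast ((n:ℝ)) (4*k), ← Real.rpow_natCast ((n:ℝ)^α) _,
        ← Real.rpow_mul hx0.le, ← Real.rpow_natCast ((n:ℝ)) Dn,
        ← Real.rpow_add hx0, ← Real.rpow_sub hx0, hE2]
      congr 1
      push_cast
      ring
    rw [hrw, hrw2]
    apply (Real.rpow_le_rpow_left_iff h1).mpr
    have hα1 : -1 < α * k := by
      have := (mul_lt_mul_of_pos_right hα.1 hk0)
      rw [neg_mul, one_div, inv_mul_cancel₀ (ne_of_gt hk0)] at this
      linarith
    have hα2 : α * ((k:ℝ)+1) < -1 := by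
      have hk10 : (0:ℝ) < (k:ℝ)+1 := by linarith
      have := (mul_lt_mul_of_pos_right hα.2 hk10)
      rw [neg_mul, one_div, inv_mul_cancel₀ (ne_of_gt hk10)] at this
      linarith
    have I1R : (k:ℝ)*(v:ℝ) ≤ (e:ℝ) + (2*(k:ℝ)^2 - 2*k + 2) - k*(Dn:ℝ) := by
      have h : ((((k:ℤ)*v + (k:ℤ)*(Dn:ℤ)) : ℤ) : ℝ) ≤ (((e + (2*(k:ℤ)^2 - 2*k + 2)) : ℤ) : ℝ) := by
        exact_mod_cast I1
      push_cast at h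
      linarith
    have I2R : ((k:ℝ)+1)*(v:ℝ) ≤ (e:ℝ) + (2*(k:ℝ)^2 + 2*k + 2) - ((k:ℝ)+1)*(Dn:ℝ) := by
      have h : (((((k:ℤ)+1)*v + ((k:ℤ)+1)*(Dn:ℤ)) : ℤ) : ℝ) ≤ (((e + (2*(k:ℤ)^2 + 2*k + 2)) : ℤ) : ℝ) := by
        exact_mod_cast I2
      push_cast at h
      linarith
    have hend := endpoint_interp k hk α hα1 hα2 (v:ℝ) (e:ℝ) (Dn:ℝ) I1R I2R
    linarith [hend]

end Statement16Helpers

/-- Bounds on `n^{ver(Ā)} p^{pair(Ā)}` for quadruples without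
an independent set, with `p = n^α`, `α ∈ (-1/k, -1/(k+1))`. -/
theorem verA_pairA_bound (k : ℕ) (hk : 1 ≤ k) (α : ℝ)
    (hα : α ∈ Set.Ioo (-(1 / (k : ℝ))) (-(1 / ((k : ℝ) + 1))))
    (n : ℕ) (hn : 1 ≤ n) (i j : ℕ) (hi : i ≤ n - 1) (hj : j ≤ n - 1)
    (A : Fin 4 → Finset (Fin n))
    (hA0 : (A 0).card = i + 1) (hA1 : (A 1).card = i + 1)
    (hA2 : (A 2).card = j + 1) (hA3 : (A 3).card = j + 1)
    (hind : ¬ HasIndepSet A) :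
    (n : ℝ) ^ (verA A) * ((n : ℝ) ^ α) ^ (pairA A) ≤
        (n : ℝ) ^ (4 * k) * ((n : ℝ) ^ α) ^ (4 * Nat.choose (k + 1) 2 - 2) ∧
      (16 * k + 15 ≤ i + j →
        (n : ℝ) ^ (verA A) * ((n : ℝ) ^ α) ^ (pairA A) ≤
          (n : ℝ) ^ (4 * k) * ((n : ℝ) ^ α) ^ (4 * Nat.choose (k + 1) 2 - 2) /
            (n : ℝ) ^ (2 * k + 2 * (i + j - 16 * k - 15))) := by
  classical
  have hind' : ∀ q : Fin 4, ∃ r : Fin 4, r ≠ q ∧ 2 ≤ ((A q) ∩ (A r)).card := by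
    intro q
    by_contra hcon
    push_neg at hcon
    exact hind ⟨q, fun r hr => by have := hcon r hr; omega⟩
  obtain ⟨q0, hq0or, hq0card⟩ :
      ∃ q0 : Fin 4, (q0 = 0 ∨ q0 = 2) ∧ (A q0).card = max (i+1) (j+1) := by
    rcases le_total j i with hij | hij
    · exact ⟨0, Or.inl rfl, by rw [hA0]; exact (Nat.max_eq_left (by omega)).symm⟩
    · exact ⟨2, Or.inr rfl, by rw [hA2]; exact (Nat.max_eq_right (by omega)).symm⟩
  have hkey : ∀ m : ℕ, 1 ≤ m →
      (m:ℤ) * verA A + (((max (i+1) (j+1) - m).choose 2 : ℕ) : ℤ)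
        ≤ pairA A + (2*(m:ℤ)^2 - 2*m + 2) := by
    intro m hm
    have h := key_bound A hind' q0 hq0or m hm
    rw [hq0card] at h
    rw [verA_eq A, pairA_eq A]
    exact h
  have pen_nonneg : ∀ m : ℕ, (0:ℤ) ≤ (((max (i+1) (j+1) - m).choose 2 : ℕ) : ℤ) :=
    fun m => Int.natCast_nonneg _
  have hk1 := hkey k hk
  have hk2 := hkey (k+1) (by omega)
  push_cast at hk2
  constructor
  · have I1 : (k:ℤ)*(verA A) + (k:ℤ)*((0:ℕ):ℤ) ≤ pairA A + (2*(k:ℤ)^2 - 2*k + 2) := by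
      have := pen_nonneg k
      push_cast
      linarith [hk1]
    have I2 : ((k:ℤ)+1)*(verA A) + ((k:ℤ)+1)*((0:ℕ):ℤ)
        ≤ pairA A + (2*(k:ℤ)^2 + 2*k + 2) := by
      have := pen_nonneg (k+1)
      push_cast at this ⊢
      nlinarith [hk2]
    have h := real_reduce n hn k hk α hα (verA A) (pairA A) 0 I1 I2
    simpa using h
  · intro hcond
    have hS : 16*k + 17 ≤ i + j + 2 := by omega
    have hM : i + j + 2 ≤ 2 * max (i+1) (j+1) := by
      have h1 : i+1 ≤ max (i+1) (j+1) := le_max_left _ _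
      have h2 : j+1 ≤ max (i+1) (j+1) := le_max_right _ _
      omega
    have hp1 := pen_bound k k (i+j+2) (max (i+1) (j+1)) hk le_rfl (by omega) hS hM
    have hp2 := pen_bound k (k+1) (i+j+2) (max (i+1) (j+1)) hk (by omega) le_rfl hS hM
    have hD : ((2*k + 2*(i+j-16*k-15) : ℕ) : ℤ) = 2*((i:ℤ)+(j:ℤ)+2) - 30*(k:ℤ) - 34 := by
      omega
    have I1 : (k:ℤ)*(verA A) + (k:ℤ)*((2*k + 2*(i+j-16*k-15) : ℕ):ℤ)
        ≤ pairA A + (2*(k:ℤ)^2 - 2*k + 2) := by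
      rw [hD]
      push_cast at hp1
      linarith [hk1, hp1]
    have I2 : ((k:ℤ)+1)*(verA A) + ((k:ℤ)+1)*((2*k + 2*(i+j-16*k-15) : ℕ):ℤ)
        ≤ pairA A + (2*(k:ℤ)^2 + 2*k + 2) := by
      rw [hD]
      push_cast at hp2
      nlinarith [hk2, hp2]
    exact real_reduce n hn k hk α hα (verA A) (pairA A) _ I1 I2

end
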